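/- In the group PSL(d, q) with d ≥ 2 acting on the projective space P(V) of a d-dimensional vector space V over 𝔽_q, the stabilizer of a projective point [v] has trivial center. -/

import Mathlib

open Matrix

/-- The map induced on projective space by an element of `SL(d, K)`. -/
noncomputable def pmap {K : Type*} [Field K] {d : ℕ}
    (A : Matrix.SpecialLinearGroup (Fin d) K) :
    Projectivization K (Fin d → K) → Projectivization K (Fin d → K) :=
  Projectivization.map
    ((Matrix.SpecialLinearGroup.toLin' A : (Fin d → K) ≃ₗ[K] (Fin d → K)) :
      (Fin d → K) →ₗ[K] (Fin d → K))
    (Matrix.SpecialLinearGroup.toLin' A).injective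

namespace Stmt17Aux

variable {K : Type*} [Field K] {d : ℕ}

lemma sl_inv_mulVec (g : Matrix.SpecialLinearGroup (Fin d) K) (x : Fin d → K) :
    (g⁻¹ : Matrix.SpecialLinearGroup (Fin d) K) *ᵥ ((g : Matrix (Fin d) (Fin d) K) *ᵥ x) = x := by
  rw [mulVec_mulVec, ← Matrix.SpecialLinearGroup.coe_mul, inv_mul_cancel,
    Matrix.SpecialLinearGroup.coe_one, one_mulVec]

lemma mulVec_ne (A : Matrix.SpecialLinearGroup (Fin d) K) {w : Fin d → K} (hw : w ≠ 0) :
    (A : Matrix (Fin d) (Fin d) K) *ᵥ w ≠ 0 := by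
  intro h
  apply hw
  have := sl_inv_mulVec A w
  rw [h, mulVec_zero] at this
  exact this.symm

lemma pmap_mk (A : Matrix.SpecialLinearGroup (Fin d) K) (w : Fin d → K) (hw : w ≠ 0) :
    pmap A (Projectivization.mk K w hw)
      = Projectivization.mk K ((A : Matrix (Fin d) (Fin d) K) *ᵥ w) (mulVec_ne A hw) := by
  simp only [pmap]
  rw [Projectivization.map_mk]
  congr 1

lemma vecMulVec_mulVec [Fintype (Fin d)] (u φ w : Fin d → K) :
    vecMulVec u φ *ᵥ w = (φ ⬝ᵥ w) • u := by
  ext i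
  simp only [vecMulVec, mulVec, dotProduct, Pi.smul_apply, smul_eq_mul, Matrix.of_apply,
    Finset.mul_sum]
  rw [Finset.sum_mul]
  exact Finset.sum_congr rfl fun j _ => by ring

lemma eigen_scalar (hd : 2 ≤ d) (h : Matrix (Fin d) (Fin d) K)
    (hh : ∀ w : Fin d → K, w ≠ 0 → ∃ c : K, h *ᵥ w = c • w) :
    ∃ c : K, h = c • (1 : Matrix (Fin d) (Fin d) K) := by
  have hd0 : 0 < d := by omega
  -- eigenvalue on each basis vector
  have hsingle : ∀ j : Fin d, (Pi.single j (1:K) : Fin d → K) ≠ 0 := by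
    intro j hj
    have := congrFun hj j
    simp at this
  have key : ∀ j : Fin d, ∃ c : K, h *ᵥ (Pi.single j 1 : Fin d → K) = c • (Pi.single j 1 : Fin d → K) :=
    fun j => hh _ (hsingle j)
  choose c hc using key
  set i0 : Fin d := ⟨0, hd0⟩
  refine ⟨c i0, ?_⟩
  have hcol : ∀ j i, h i j = c j * (if i = j then (1:K) else 0) := by
    intro j i
    have := congrFun (hc j) i
    simpa [mulVec_single, Pi.single_apply] using this
  have hceq : ∀ j : Fin d, c j = c i0 := by
    intro j
    by_cases hji : j = i0
    · rw [hji]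
    · have hne : (Pi.single i0 (1:K) + Pi.single j 1 : Fin d → K) ≠ 0 := by
        intro hcon
        have := congrFun hcon i0
        simp [Pi.single_apply, Ne.symm hji] at this
      obtain ⟨e, he⟩ := hh _ hne
      rw [mulVec_add, hc i0, hc j] at he
      have h1 := congrFun he i0
      have h2 := congrFun he j
      simp [Pi.single_apply, hji, Ne.symm hji] at h1 h2
      rw [h1, h2]
  ext i j
  rw [hcol j i, hceq j]
  by_cases hij : i = j <;> simp [Matrix.one_apply, hij]

lemma comm_of_stab (hd : 2 ≤ d) {v : Fin d → K} (hv : v ≠ 0)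
    (A B : Matrix.SpecialLinearGroup (Fin d) K)
    {l b : K}
    (hA : (A : Matrix (Fin d) (Fin d) K) *ᵥ v = l • v)
    (hB : (B : Matrix (Fin d) (Fin d) K) *ᵥ v = b • v)
    (hcomm : pmap A ∘ pmap B = pmap B ∘ pmap A) :
    (A : Matrix (Fin d) (Fin d) K) * (B : Matrix (Fin d) (Fin d) K)
      = (B : Matrix (Fin d) (Fin d) K) * (A : Matrix (Fin d) (Fin d) K) := by
  set h : Matrix.SpecialLinearGroup (Fin d) K := (B * A)⁻¹ * (A * B) with hh
  have heigen : ∀ w : Fin d → K, w ≠ 0 →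
      ∃ c : K, (h : Matrix (Fin d) (Fin d) K) *ᵥ w = c • w := by
    intro w hw
    have := congrFun hcomm (Projectivization.mk K w hw)
    simp only [Function.comp_apply, pmap_mk] at this
    rw [Projectivization.mk_eq_mk_iff'] at this
    obtain ⟨a, ha⟩ := this
    refine ⟨a, ?_⟩
    have h1 : (h : Matrix (Fin d) (Fin d) K) *ᵥ w
        = ((B * A)⁻¹ : Matrix.SpecialLinearGroup (Fin d) K) *ᵥ
          (((A * B : Matrix.SpecialLinearGroup (Fin d) K) : Matrix (Fin d) (Fin d) K) *ᵥ w) := by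
      rw [mulVec_mulVec, ← Matrix.SpecialLinearGroup.coe_mul]
    have hw2 : (B : Matrix (Fin d) (Fin d) K) *ᵥ ((A : Matrix (Fin d) (Fin d) K) *ᵥ w)
        = ((B * A : Matrix.SpecialLinearGroup (Fin d) K) : Matrix (Fin d) (Fin d) K) *ᵥ w := by
      rw [mulVec_mulVec, Matrix.SpecialLinearGroup.coe_mul]
    rw [h1, Matrix.SpecialLinearGroup.coe_mul, ← mulVec_mulVec, ← ha, mulVec_smul, hw2,
      sl_inv_mulVec]
  obtain ⟨c, hc⟩ := eigen_scalar hd _ heigen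
  have hfix : (h : Matrix (Fin d) (Fin d) K) *ᵥ v = v := by
    have e1 : ((A * B : Matrix.SpecialLinearGroup (Fin d) K) : Matrix (Fin d) (Fin d) K) *ᵥ v
        = (l * b) • v := by
      rw [Matrix.SpecialLinearGroup.coe_mul, ← mulVec_mulVec, hB, mulVec_smul, hA,
        smul_smul, mul_comm]
    have e2 : ((B * A : Matrix.SpecialLinearGroup (Fin d) K) : Matrix (Fin d) (Fin d) K) *ᵥ v
        = (l * b) • v := by
      rw [Matrix.SpecialLinearGroup.coe_mul, ← mulVec_mulVec, hA, mulVec_smul, hB,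
        smul_smul, mul_comm]
    have h1 : (h : Matrix (Fin d) (Fin d) K) *ᵥ v
        = ((B * A)⁻¹ : Matrix.SpecialLinearGroup (Fin d) K) *ᵥ
          (((A * B : Matrix.SpecialLinearGroup (Fin d) K) : Matrix (Fin d) (Fin d) K) *ᵥ v) := by
      rw [mulVec_mulVec, ← Matrix.SpecialLinearGroup.coe_mul]
    rw [h1, e1, ← e2, sl_inv_mulVec]
  -- deduce c = 1
  obtain ⟨i0, hi0⟩ : ∃ i, v i ≠ 0 := Function.ne_iff.mp hv
  have hc1 : c = 1 := by
    have h2 : (c • (1 : Matrix (Fin d) (Fin d) K)) *ᵥ v = v := by rw [← hc]; exact hfix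
    rw [smul_mulVec, one_mulVec] at h2
    have h3 : c * v i0 = v i0 := congrFun h2 i0
    field_simp at h3
    exact h3
  have hone : h = 1 := by
    apply Subtype.coe_injective
    show (h : Matrix (Fin d) (Fin d) K)
      = ((1 : Matrix.SpecialLinearGroup (Fin d) K) : Matrix (Fin d) (Fin d) K)
    rw [hc, hc1, one_smul, Matrix.SpecialLinearGroup.coe_one]
  have : A * B = B * A := by
    have := hone
    rw [hh, inv_mul_eq_one] at this
    exact this.symm
  rw [← Matrix.SpecialLinearGroup.coe_mul, this, Matrix.SpecialLinearGroup.coe_mul]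

lemma transvection_det (u φ : Fin d → K) (hφu : φ ⬝ᵥ u = 0) :
    (1 + vecMulVec u φ).det = 1 := by
  rw [vecMulVec_eq Unit, det_one_add_replicateCol_mul_replicateRow, hφu, add_zero]

lemma exists_a [Fintype K] [DecidableEq K] (h4 : 4 ≤ Fintype.card K) : ∃ a : K, a ≠ 0 ∧ a * a ≠ 1 := by
  by_contra hcon
  push_neg at hcon
  set p : Polynomial K := Polynomial.X ^ 3 - Polynomial.X with hp
  have hdeg : p.natDegree = 3 := by rw [hp]; compute_degree!
  have hp0 : p ≠ 0 := by
    intro h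
    rw [h] at hdeg
    simp at hdeg
  have hroot : ∀ a : K, p.IsRoot a := by
    intro a
    simp only [hp, Polynomial.IsRoot, Polynomial.eval_sub, Polynomial.eval_pow, Polynomial.eval_X]
    by_cases ha : a = 0
    · simp [ha]
    · have h2 := hcon a ha
      have h3 : a ^ 3 = a := by
        calc a ^ 3 = (a * a) * a := by ring
        _ = 1 * a := by rw [h2]
        _ = a := one_mul a
      rw [h3, sub_self]
  have hsub : (Finset.univ : Finset K) ⊆ p.roots.toFinset := by
    intro a _
    rw [Multiset.mem_toFinset, Polynomial.mem_roots hp0]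
    exact hroot a
  have h1 := Finset.card_le_card hsub
  rw [Finset.card_univ] at h1
  have h2 := Multiset.toFinset_card_le p.roots
  have h3 := Polynomial.card_roots' p
  omega

end Stmt17Aux

theorem stmt17 {K : Type*} [Field K] [Fintype K] {d : ℕ} (hd : 2 ≤ d)
    (hdq : d = 2 → 4 ≤ Fintype.card K) (v : Fin d → K) (hv : v ≠ 0) :
    ∀ A : Matrix.SpecialLinearGroup (Fin d) K,
      pmap A (Projectivization.mk K v hv) = Projectivization.mk K v hv →
      (∀ B : Matrix.SpecialLinearGroup (Fin d) K,
        pmap B (Projectivization.mk K v hv) = Projectivization.mk K v hv →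
        pmap A ∘ pmap B = pmap B ∘ pmap A) →
      pmap A = id := by
  classical
  intro A hA hC
  rw [Stmt17Aux.pmap_mk, Projectivization.mk_eq_mk_iff] at hA
  obtain ⟨lam, hlam⟩ := hA
  set l : K := (lam : K) with hl
  have hl0 : l ≠ 0 := lam.ne_zero
  have hAv : (A : Matrix (Fin d) (Fin d) K) *ᵥ v = l • v := by
    rw [← hlam, Units.smul_def]
  obtain ⟨i0, hi0⟩ : ∃ i, v i ≠ 0 := Function.ne_iff.mp hv
  -- Step 1: A commutes on functionals vanishing on v
  have hphi : ∀ φ : Fin d → K, φ ⬝ᵥ v = 0 → ∀ w : Fin d → K,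
      φ ⬝ᵥ ((A : Matrix (Fin d) (Fin d) K) *ᵥ w) = l * (φ ⬝ᵥ w) := by
    intro φ hφv w
    set T : Matrix (Fin d) (Fin d) K := 1 + vecMulVec v φ with hT
    have hTdet : T.det = 1 := Stmt17Aux.transvection_det v φ hφv
    set Tsl : Matrix.SpecialLinearGroup (Fin d) K := ⟨T, hTdet⟩ with hTsl
    have hcoe : (Tsl : Matrix (Fin d) (Fin d) K) = T := rfl
    have hTapp : ∀ u : Fin d → K, T *ᵥ u = u + (φ ⬝ᵥ u) • v := by
      intro u
      rw [hT, add_mulVec, one_mulVec, Stmt17Aux.vecMulVec_mulVec]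
    have hTv : (Tsl : Matrix (Fin d) (Fin d) K) *ᵥ v = (1 : K) • v := by
      rw [hcoe, hTapp, hφv, zero_smul, add_zero, one_smul]
    have hTstab : pmap Tsl (Projectivization.mk K v hv) = Projectivization.mk K v hv := by
      rw [Stmt17Aux.pmap_mk, Projectivization.mk_eq_mk_iff']
      exact ⟨1, by rw [hTv]⟩
    have hcm := Stmt17Aux.comm_of_stab hd hv A Tsl hAv hTv (hC Tsl hTstab)
    rw [hcoe] at hcm
    have happ : (A : Matrix (Fin d) (Fin d) K) *ᵥ (T *ᵥ w)
        = T *ᵥ ((A : Matrix (Fin d) (Fin d) K) *ᵥ w) := by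
      rw [mulVec_mulVec, mulVec_mulVec, hcm]
    rw [hTapp, hTapp, mulVec_add, mulVec_smul, hAv, smul_smul] at happ
    have hcancel : ((φ ⬝ᵥ w) * l) • v = (φ ⬝ᵥ ((A : Matrix (Fin d) (Fin d) K) *ᵥ w)) • v :=
      add_left_cancel happ
    have := congrFun hcancel i0
    simp only [Pi.smul_apply, smul_eq_mul] at this
    have h2 := mul_right_cancel₀ hi0 this
    rw [← h2, mul_comm]
  -- Step 2: A = l • 1 + v ⊗ ψ
  set ψ : (Fin d → K) → K :=
    fun w => (((A : Matrix (Fin d) (Fin d) K) *ᵥ w) i0 - l * w i0) / v i0 with hψ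
  have hpsi : ∀ w : Fin d → K, (A : Matrix (Fin d) (Fin d) K) *ᵥ w = l • w + ψ w • v := by
    intro w
    funext j
    set φ : Fin d → K := (Pi.single j 1 : Fin d → K) - (v j / v i0) • (Pi.single i0 1 : Fin d → K)
      with hφdef
    have hφ : φ ⬝ᵥ v = 0 := by
      simp only [hφdef, sub_dotProduct, smul_dotProduct, single_dotProduct, one_mul, smul_eq_mul]
      field_simp
      ring
    have hkey := hphi φ hφ w
    simp only [hφdef, sub_dotProduct, smul_dotProduct, single_dotProduct, one_mul,
      smul_eq_mul] at hkey
    simp only [Pi.add_apply, Pi.smul_apply, smul_eq_mul, hψ]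
    field_simp at hkey ⊢
    linear_combination hkey
  -- facts about ψ
  have hpsi_zero : ∀ w : Fin d → K, (A : Matrix (Fin d) (Fin d) K) *ᵥ w = l • w → ψ w = 0 := by
    intro w hw
    have := hpsi w
    rw [hw, left_eq_add] at this
    have := congrFun this i0
    simp only [Pi.smul_apply, smul_eq_mul, Pi.zero_apply] at this
    exact (mul_eq_zero.mp this).resolve_right hi0
  -- Step 3: ψ = 0
  have hpsi0 : ∀ w : Fin d → K, ψ w = 0 := by
    by_contra hcon
    push_neg at hcon
    obtain ⟨w, hw⟩ := hcon
    have hindep : ∀ s : K, s • v ≠ w := by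
      intro s hs
      apply hw
      apply hpsi_zero
      rw [← hs, mulVec_smul, hAv, smul_smul, smul_smul, mul_comm]
    have hw0 : w ≠ 0 := by
      intro h0
      exact hindep 0 (by rw [h0, zero_smul])
    by_cases hd3 : 3 ≤ d
    · -- d ≥ 3 : pick a functional vanishing on v and w
      set L : (Fin d → K) →ₗ[K] K × K :=
        { toFun := fun φ => (φ ⬝ᵥ v, φ ⬝ᵥ w)
          map_add' := fun x y => by simp [add_dotProduct]
          map_smul' := fun c x => by simp [smul_dotProduct] } with hL
      have hker : LinearMap.ker L ≠ ⊥ := by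
        intro hbot
        have hinj : Function.Injective L := LinearMap.ker_eq_bot.mp hbot
        have hle := LinearMap.finrank_le_finrank_of_injective hinj
        rw [Module.finrank_fin_fun] at hle
        have : Module.finrank K (K × K) = 2 := by
          simp [Module.finrank_prod]
        omega
      obtain ⟨φ, hφmem, hφne⟩ := (Submodule.ne_bot_iff _).mp hker
      have hφ2 := LinearMap.mem_ker.mp hφmem
      have hφv : φ ⬝ᵥ v = 0 := congrArg Prod.fst hφ2
      have hφw : φ ⬝ᵥ w = 0 := congrArg Prod.snd hφ2
      obtain ⟨j, hj⟩ : ∃ j, φ j ≠ 0 := Function.ne_iff.mp hφne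
      set u : Fin d → K := Pi.single j 1 with hu
      have hφu : φ ⬝ᵥ u = φ j := by simp [hu, dotProduct_single]
      set B : Matrix (Fin d) (Fin d) K := 1 + vecMulVec w φ with hB
      have hBdet : B.det = 1 := Stmt17Aux.transvection_det w φ hφw
      set Bsl : Matrix.SpecialLinearGroup (Fin d) K := ⟨B, hBdet⟩ with hBsl
      have hcoe : (Bsl : Matrix (Fin d) (Fin d) K) = B := rfl
      have hBapp : ∀ u' : Fin d → K, B *ᵥ u' = u' + (φ ⬝ᵥ u') • w := by
        intro u'
        rw [hB, add_mulVec, one_mulVec, Stmt17Aux.vecMulVec_mulVec]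
      have hBv : (Bsl : Matrix (Fin d) (Fin d) K) *ᵥ v = (1 : K) • v := by
        rw [hcoe, hBapp, hφv, zero_smul, add_zero, one_smul]
      have hBstab : pmap Bsl (Projectivization.mk K v hv) = Projectivization.mk K v hv := by
        rw [Stmt17Aux.pmap_mk, Projectivization.mk_eq_mk_iff']
        exact ⟨1, by rw [hBv]⟩
      have hcm := Stmt17Aux.comm_of_stab hd hv A Bsl hAv hBv (hC Bsl hBstab)
      rw [hcoe] at hcm
      have happ : (A : Matrix (Fin d) (Fin d) K) *ᵥ (B *ᵥ u)
          = B *ᵥ ((A : Matrix (Fin d) (Fin d) K) *ᵥ u) := by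
        rw [mulVec_mulVec, mulVec_mulVec, hcm]
      have hLHS : (A : Matrix (Fin d) (Fin d) K) *ᵥ (B *ᵥ u)
          = ((A : Matrix (Fin d) (Fin d) K) *ᵥ u + ((φ ⬝ᵥ u) * l) • w)
            + ((φ ⬝ᵥ u) * ψ w) • v := by
        rw [hBapp, mulVec_add, mulVec_smul, hpsi w, smul_add, smul_smul, smul_smul, add_assoc]
      have hRHS : B *ᵥ ((A : Matrix (Fin d) (Fin d) K) *ᵥ u)
          = (A : Matrix (Fin d) (Fin d) K) *ᵥ u + ((φ ⬝ᵥ u) * l) • w := by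
        rw [hBapp, hphi φ hφv u, mul_comm]
      rw [hLHS, hRHS] at happ
      have hz : ((φ ⬝ᵥ u) * ψ w) • v = 0 := by
        rwa [add_eq_left] at happ
      have := congrFun hz i0
      simp only [Pi.smul_apply, smul_eq_mul, Pi.zero_apply] at this
      rcases mul_eq_zero.mp this with h | h
      · rcases mul_eq_zero.mp h with h' | h'
        · rw [hφu] at h'
          exact hj h'
        · exact hw h'
      · exact hi0 h
    · -- d = 2
      have hd2 : d = 2 := by omega
      obtain ⟨a, ha0, ha1⟩ := Stmt17Aux.exists_a (hdq hd2)
      have li : LinearIndependent K ![v, w] := by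
        rw [LinearIndependent.pair_iff' hv]
        exact hindep
      have hcard : Fintype.card (Fin 2) = Module.finrank K (Fin d → K) := by
        rw [Module.finrank_fin_fun, Fintype.card_fin, hd2]
      set b := basisOfLinearIndependentOfCardEqFinrank li hcard with hb
      have hbcoe : ⇑b = ![v, w] := coe_basisOfLinearIndependentOfCardEqFinrank li hcard
      have hb0 : b 0 = v := by rw [hbcoe]; rfl
      have hb1 : b 1 = w := by rw [hbcoe]; rfl
      set f : (Fin d → K) →ₗ[K] (Fin d → K) := b.constr K ![a • v, a⁻¹ • w] with hf
      have hf0 : f (b 0) = a • b 0 := by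
        rw [hf, b.constr_basis, hb0]; rfl
      have hf1 : f (b 1) = a⁻¹ • b 1 := by
        rw [hf, b.constr_basis, hb1]; rfl
      set B : Matrix (Fin d) (Fin d) K := LinearMap.toMatrix' f with hBm
      have hBapp : ∀ u' : Fin d → K, B *ᵥ u' = f u' := by
        intro u'
        rw [hBm, ← Matrix.toLin'_apply, Matrix.toLin'_toMatrix']
      have hBdet : B.det = 1 := by
        rw [hBm, LinearMap.det_toMatrix', ← LinearMap.det_toMatrix b]
        have hmat : LinearMap.toMatrix b b f = Matrix.diagonal ![a, a⁻¹] := by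
          have hdiag : ∀ j : Fin 2, f (b j) = (![a, a⁻¹] j) • b j := by
            intro j
            fin_cases j
            · exact hf0
            · exact hf1
          ext i j
          rw [LinearMap.toMatrix_apply, hdiag j, _root_.map_smul, b.repr_self, Finsupp.smul_single,
            smul_eq_mul, mul_one, Finsupp.single_apply, Matrix.diagonal_apply]
          by_cases hij : i = j
          · simp [hij]
          · simp [hij, Ne.symm hij]
        rw [hmat, Matrix.det_diagonal, Fin.prod_univ_two]
        simp [mul_inv_cancel₀ ha0]
      set Bsl : Matrix.SpecialLinearGroup (Fin d) K := ⟨B, hBdet⟩ with hBsl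
      have hcoe : (Bsl : Matrix (Fin d) (Fin d) K) = B := rfl
      have hBv : (Bsl : Matrix (Fin d) (Fin d) K) *ᵥ v = a • v := by
        rw [hcoe, hBapp, ← hb0, hf0]
      have hBw : B *ᵥ w = a⁻¹ • w := by
        rw [hBapp, ← hb1, hf1]
      have hBstab : pmap Bsl (Projectivization.mk K v hv) = Projectivization.mk K v hv := by
        rw [Stmt17Aux.pmap_mk, Projectivization.mk_eq_mk_iff']
        exact ⟨a, by rw [hBv]⟩
      have hcm := Stmt17Aux.comm_of_stab hd hv A Bsl hAv hBv (hC Bsl hBstab)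
      rw [hcoe] at hcm
      have happ : (A : Matrix (Fin d) (Fin d) K) *ᵥ (B *ᵥ w)
          = B *ᵥ ((A : Matrix (Fin d) (Fin d) K) *ᵥ w) := by
        rw [mulVec_mulVec, mulVec_mulVec, hcm]
      have hLHS : (A : Matrix (Fin d) (Fin d) K) *ᵥ (B *ᵥ w)
          = (a⁻¹ * l) • w + (a⁻¹ * ψ w) • v := by
        rw [hBw, mulVec_smul, hpsi w, smul_add, smul_smul, smul_smul]
      have hRHS : B *ᵥ ((A : Matrix (Fin d) (Fin d) K) *ᵥ w)
          = (a⁻¹ * l) • w + (a * ψ w) • v := by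
        rw [hpsi w, mulVec_add, mulVec_smul, mulVec_smul, hBw, hBapp v, ← hb0, hf0, hb0,
          smul_smul, smul_smul, mul_comm l a⁻¹, mul_comm (ψ w) a]
      rw [hLHS, hRHS] at happ
      have hz : (a⁻¹ * ψ w) • v = (a * ψ w) • v := add_left_cancel happ
      have := congrFun hz i0
      simp only [Pi.smul_apply, smul_eq_mul] at this
      have h2 := mul_right_cancel₀ hi0 this
      have h3 := mul_right_cancel₀ hw h2
      apply ha1
      nth_rewrite 2 [← h3]
      exact mul_inv_cancel₀ ha0
  -- Step 4: conclude
  have hfinal : ∀ w : Fin d → K, (A : Matrix (Fin d) (Fin d) K) *ᵥ w = l • w := by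
    intro w
    rw [hpsi w, hpsi0 w, zero_smul, add_zero]
  funext x
  induction x using Projectivization.ind with
  | h w hw =>
    rw [Stmt17Aux.pmap_mk, id_eq, Projectivization.mk_eq_mk_iff]
    exact ⟨lam, by rw [Units.smul_def, ← hl, ← hfinal w]⟩
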